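/- Let (i_k)_{k∈ℕ} be a sequence of elements of I and i ∈ I. If ⋂_k α(i_k) = α(i), then there exists a natural number n such that i_0 ⊓ i_1 ⊓ ... ⊓ i_n = i. -/

import Mathlib

open Set Topology Filter Polynomial

noncomputable section

/-- A point of the plaque inverse limit of the iterations of `f`:
a sequence `x : ℕ → ℂ` with `f (x (n+1)) = x n` for all `n`. -/
structure PIL (f : ℂ → ℂ) where
  seq : ℕ → ℂ
  compat : ∀ n, f (seq (n + 1)) = seq n

/-- `c` is a critical point of `f`: a zero of the derivative of `f`. -/
def IsCriticalPt (f : ℂ → ℂ) (c : ℂ) : Prop := deriv f c = 0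

/-- `U` is the pullback sequence of the open, connected, simply connected set `U 0`
along the point `x` of the plaque inverse limit:  `U (n+1)` is the connected
component of `f ⁻¹' (U n)` containing `x.seq (n+1)`. -/
def IsPullbackSeq (f : ℂ → ℂ) (x : PIL f) (U : ℕ → Set ℂ) : Prop :=
  IsOpen (U 0) ∧ IsConnected (U 0) ∧ SimplyConnectedSpace (U 0) ∧ x.seq 0 ∈ U 0 ∧
    ∀ n, U (n + 1) = connectedComponentIn (f ⁻¹' U n) (x.seq (n + 1))

/-- The basic neighborhood `Û` associated to a pullback sequence `U`. -/
def basicNbhd (f : ℂ → ℂ) (U : ℕ → Set ℂ) : Set (PIL f) :=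
  {y : PIL f | ∀ n, y.seq n ∈ U n}

/-- The plaque topology on the plaque inverse limit: generated by all basic
neighborhoods of all points. -/
instance plaqueTopology (f : ℂ → ℂ) : TopologicalSpace (PIL f) :=
  TopologicalSpace.generateFrom
    {V | ∃ (x : PIL f) (U : ℕ → Set ℂ), IsPullbackSeq f x U ∧ V = basicNbhd f U}

/-- A point `x` of the plaque inverse limit is regular if along some pullback
sequence the levels eventually contain no critical point of `f`. -/
def RegularPt (f : ℂ → ℂ) (x : PIL f) : Prop :=
  ∃ U, IsPullbackSeq f x U ∧ ∃ N, ∀ n ≥ N, ∀ c, IsCriticalPt f c → c ∉ U n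

/-- The Boolean algebra `I` of binary sequences modulo eventual equality. -/
abbrev BinGerm := Filter.Germ (Filter.atTop : Filter ℕ) Bool

/-- `α(a) = {b ∈ I | b ≤ a}`. -/
def alphaSet (a : BinGerm) : Set BinGerm := {b | b ≤ a}

/-- The least element `𝟎` of `I`: the class of the constant-`0` sequence. -/
def binZero : BinGerm := (↑(fun _ : ℕ => false) : BinGerm)

/-- `ind(U,c) ∈ I`: the class of the binary sequence whose `n`-th entry is `1`
exactly when `c ∈ U n`. -/
def indClass (U : ℕ → Set ℂ) (c : ℂ) : BinGerm :=
  (↑(fun n => @decide (c ∈ U n) (Classical.propDecidable _)) : BinGerm)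

/-- `Useq` is a sequence of pullback sequences along `x` whose basic neighborhoods
form a decreasing neighborhood basis at `x` in the plaque topology. -/
def IsShrinkingBasisAt (f : ℂ → ℂ) (x : PIL f) (Useq : ℕ → ℕ → Set ℂ) : Prop :=
  (∀ j, IsPullbackSeq f x (Useq j)) ∧
  (∀ j, basicNbhd f (Useq (j + 1)) ⊆ basicNbhd f (Useq j)) ∧
  (∀ S : Set (PIL f), S ∈ nhds x → ∃ j, basicNbhd f (Useq j) ⊆ S)

/-- The signature `sign(x,c) ⊆ I`:  `⋂_j α(ind(U(j),c))` for a sequence of pullback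
sequences along `x` whose basic neighborhoods form a decreasing neighborhood basis
at `x` (the intersection is independent of this choice). -/
def signature (f : ℂ → ℂ) (x : PIL f) (c : ℂ) : Set BinGerm :=
  ⋃ (Useq : ℕ → ℕ → Set ℂ) (_ : IsShrinkingBasisAt f x Useq),
    ⋂ j, alphaSet (indClass (Useq j) c)

/-- `S ⊆ I` has a maximal element. -/
def HasMaxElem (S : Set BinGerm) : Prop := ∃ a ∈ S, ∀ b ∈ S, b ≤ a

/-- The set of path components of a subset `V` of a topological space. -/
def pathComponentsIn {X : Type*} [TopologicalSpace X] (V : Set X) : Set (Set X) :=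
  {P | ∃ y ∈ V, P = {z | z ∈ V ∧ JoinedIn V y z}}

/-- `x` is the invariant lift of a super-attracting, attracting or parabolic cycle:
`x` is periodic of some period `p ≥ 1` and the multiplier `λ = (f^[p])'(x 0)`
satisfies `|λ| < 1` or `λ ^ k = 1` for some `k ≥ 1`. -/
def IsCycleLift (f : ℂ → ℂ) (x : PIL f) : Prop :=
  ∃ p, 1 ≤ p ∧ (∀ n, x.seq (n + p) = x.seq n) ∧
    (‖deriv (f^[p]) (x.seq 0)‖ < 1 ∨
      ∃ k, 1 ≤ k ∧ (deriv (f^[p]) (x.seq 0)) ^ k = 1)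

/-- The basin of attraction of the fixed point `x₀`. -/
def basinOf (f : ℂ → ℂ) (x₀ : ℂ) : Set ℂ :=
  {z | Tendsto (fun n => f^[n] z) atTop (nhds x₀)}

/-- The immediate basin of attraction of the fixed point `x₀`: the union of the
connected components of the interior of the basin whose closure contains `x₀`. -/
def immediateBasin (f : ℂ → ℂ) (x₀ : ℂ) : Set ℂ :=
  ⋃ (z : ℂ) (_ : z ∈ interior (basinOf f x₀))
    (_ : x₀ ∈ closure (connectedComponentIn (interior (basinOf f x₀)) z)),
    connectedComponentIn (interior (basinOf f x₀)) z

/-- `i(q)`: the number of indices `i` with `n i ≤ q` (for a strictly monotone `n`). -/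
def countLE (n : ℕ → ℕ) (q : ℕ) : ℕ :=
  ((Finset.range (q + 1)).filter (fun i => n i ≤ q)).card

/-- The map `f̂ : T∞ → T∞` induced by `f`. -/
def fhat (f : ℂ → ℂ) (x : PIL f) : PIL f :=
  ⟨fun n => f (x.seq n), fun n => congrArg f (x.compat n)⟩

/-- `shift₋ₘ : I → I`, deleting the first `m` entries of a binary sequence. -/
def shiftMinus (m : ℕ) (a : BinGerm) : BinGerm :=
  a.compTendsto (fun n => n + m) (tendsto_add_atTop_nat m)

theorem stmt7 (iseq : ℕ → BinGerm) (i : BinGerm)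
    (h : (⋂ k, alphaSet (iseq k)) = alphaSet i) :
    ∃ n : ℕ, (Finset.range (n + 1)).inf' (by simp) iseq = i := by
  classical
  set b : ℕ → BinGerm := fun n => (Finset.range (n + 1)).inf' (by simp) iseq with hb
  have hii : i ∈ ⋂ k, alphaSet (iseq k) := by rw [h]; exact le_refl i
  have hile : ∀ k, i ≤ iseq k := fun k => Set.mem_iInter.mp hii k
  have hib : ∀ n, i ≤ b n := fun n => Finset.le_inf' _ _ (fun k _ => hile k)
  have hbseq : ∀ n k, k ∈ Finset.range (n+1) → b n ≤ iseq k := fun n k hk =>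
    Finset.inf'_le _ hk
  suffices hs : ∃ n, b n = i by exact hs
  by_contra hne
  push_neg at hne
  have hFex : ∀ n, ∃ f : ℕ → Bool, (↑f : BinGerm) = b n := fun n =>
    Filter.Germ.inductionOn (b n) (fun f => ⟨f, rfl⟩)
  choose F hF using hFex
  obtain ⟨G, hG⟩ : ∃ g : ℕ → Bool, (↑g : BinGerm) = i :=
    Filter.Germ.inductionOn i (fun g => ⟨g, rfl⟩)
  have hGF : ∀ n, ∀ᶠ k in atTop, G k ≤ F n k := by
    intro n
    have := hib n
    rw [← hG, ← hF n, Filter.Germ.coe_le] at this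
    exact this
  have hFmono : ∀ n m, m ≤ n → ∀ᶠ k in atTop, F n k ≤ F m k := by
    intro n m hmn
    have hbnm : b n ≤ b m :=
      Finset.le_inf' _ _ (fun k hk => hbseq n k
        (Finset.mem_range.mpr (lt_of_lt_of_le (Finset.mem_range.mp hk) (by omega))))
    rw [← hF n, ← hF m, Filter.Germ.coe_le] at hbnm
    exact hbnm
  have hfreq : ∀ n, ∃ᶠ k in atTop, F n k = true ∧ G k = false := by
    intro n
    have hne' : ¬ (∀ᶠ k in atTop, F n k = G k) := by
      intro hev
      exact hne n (by rw [← hF n, ← hG]; exact Filter.Germ.coe_eq.mpr hev)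
    have hfr : ∃ᶠ k in atTop, F n k ≠ G k := Filter.not_eventually.mp hne'
    refine (hfr.and_eventually (hGF n)).mono ?_
    rintro k ⟨hne2, hle2⟩
    revert hne2 hle2
    cases (F n k) <;> cases (G k) <;> simp
  have hex : ∀ n N, ∃ k, N ≤ k ∧ (F n k = true ∧ G k = false ∧
      ∀ m, m ≤ n → F n k ≤ F m k) := by
    intro n N
    have hev : ∀ᶠ k in atTop, ∀ m, m ≤ n → F n k ≤ F m k := by
      have h1 : ∀ᶠ k in atTop, ∀ m ∈ Finset.range (n+1), F n k ≤ F m k :=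
        (Filter.eventually_all_finset _).mpr (fun m hm =>
          hFmono n m (Nat.lt_succ_iff.mp (Finset.mem_range.mp hm)))
      exact h1.mono (fun k hk m hm => hk m (Finset.mem_range.mpr (by omega)))
    obtain ⟨k, ⟨h1, h2⟩, h3, h4⟩ :=
      ((hfreq n).and_eventually (hev.and (Filter.eventually_ge_atTop N))).exists
    exact ⟨k, h4, h1, h2, h3⟩
  -- diagonal sequence
  let x : ℕ → ℕ := fun n => Nat.rec (Classical.choose (hex 0 0))
    (fun n ih => Classical.choose (hex (n+1) (ih+1))) n
  have hx0 : 0 ≤ x 0 ∧ (F 0 (x 0) = true ∧ G (x 0) = false ∧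
      ∀ m, m ≤ 0 → F 0 (x 0) ≤ F m (x 0)) := Classical.choose_spec (hex 0 0)
  have hxs : ∀ n, x n + 1 ≤ x (n+1) ∧ (F (n+1) (x (n+1)) = true ∧
      G (x (n+1)) = false ∧ ∀ m, m ≤ n+1 → F (n+1) (x (n+1)) ≤ F m (x (n+1))) :=
    fun n => Classical.choose_spec (hex (n+1) (x n + 1))
  have hxP : ∀ n, F n (x n) = true ∧ G (x n) = false ∧
      ∀ m, m ≤ n → F n (x n) ≤ F m (x n) := by
    intro n
    cases n with
    | zero => exact hx0.2
    | succ n => exact (hxs n).2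
  have hxmono : StrictMono x := strictMono_nat_of_lt_succ (fun n => by
    have := (hxs n).1; omega)
  -- the diagonal germ
  let g : ℕ → Bool := fun k => @ite _ (∃ n, x n = k) (Classical.propDecidable _) true (G k)
  have hg_mem : ∀ n, g (x n) = true := fun n => by
    simp only [g]
    rw [if_pos ⟨n, rfl⟩]
  have hg_not : ∀ k, ¬(∃ n, x n = k) → g k = G k := fun k hk => by
    simp only [g]
    rw [if_neg hk]
  have hgi : i ≤ (↑g : BinGerm) := by
    rw [← hG, Filter.Germ.coe_le]
    filter_upwards with k
    rcases Classical.em (∃ n, x n = k) with hk | hk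
    · obtain ⟨n, rfl⟩ := hk
      rw [hg_mem n]
      exact Bool.le_true _
    · rw [hg_not k hk]
  have hgne : (↑g : BinGerm) ≠ i := by
    rw [← hG]
    intro heq
    have hev : ∀ᶠ k in atTop, g k = G k := Filter.Germ.coe_eq.mp heq
    obtain ⟨N, hN⟩ := Filter.eventually_atTop.mp hev
    have hxN : N ≤ x N := hxmono.le_apply
    have h1 := hN (x N) hxN
    rw [hg_mem N, (hxP N).2.1] at h1
    exact Bool.noConfusion h1
  have hgb : ∀ m, (↑g : BinGerm) ≤ b m := by
    intro m
    rw [← hF m, Filter.Germ.coe_le]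
    have hGFm := Filter.eventually_atTop.mp (hGF m)
    obtain ⟨M, hM⟩ := hGFm
    have : ∀ᶠ k in atTop, g k ≤ F m k := by
      rw [Filter.eventually_atTop]
      refine ⟨max M (x m + 1), fun k hk => ?_⟩
      rcases Classical.em (∃ n, x n = k) with hkx | hkx
      · obtain ⟨n, rfl⟩ := hkx
        have hmn : m < n := by
          have hlt : x m < x n := by
            have := le_max_right M (x m + 1); omega
          exact hxmono.lt_iff_lt.mp hlt
        have h1 : F n (x n) = true := (hxP n).1
        have h2 := (hxP n).2.2 m (le_of_lt hmn)
        rw [hg_mem n]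
        rw [h1] at h2
        exact h2
      · rw [hg_not k hkx]
        exact hM k (le_trans (le_max_left _ _) hk)
    exact this
  -- conclude
  have hgmem : (↑g : BinGerm) ∈ ⋂ k, alphaSet (iseq k) :=
    Set.mem_iInter.mpr (fun k => le_trans (hgb k) (hbseq k k (by simp)))
  rw [h] at hgmem
  exact hgne (le_antisymm hgmem hgi)

end
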